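/- For the reduced free group RF_2 on two generators x_1, x_2, any conjugating automorphism φ ∈ Aut_C(RF_2) is determined by the pair (LK_{21}(φ), LK_{12}(φ)) ∈ Z², where φ(x_1) = λ_1⁻¹ x_1 λ_1 with λ_1 = x_2^{LK_{21}(φ)} and φ(x_2) = λ_2⁻¹ x_2 λ_2 with λ_2 = x_1^{LK_{12}(φ)}; in particular Aut_C(RF_2) ≅ Z² as a group. -/

import Mathlib

open scoped commutatorElement

/-- The defining relators of the reduced free group: commutators of a generator
with any conjugate of itself. -/
def RFrel (n : ℕ) : Set (FreeGroup (Fin n)) :=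
  {w | ∃ (i : Fin n) (g : FreeGroup (Fin n)),
    w = ⁅FreeGroup.of i, g * FreeGroup.of i * g⁻¹⁆}

/-- The reduced free group on `n` generators. -/
def RF (n : ℕ) : Type := FreeGroup (Fin n) ⧸ Subgroup.normalClosure (RFrel n)

instance (n : ℕ) : Group (RF n) := QuotientGroup.Quotient.group _

/-- The image of the `i`-th generator in the reduced free group. -/
def x {n : ℕ} (i : Fin n) : RF n := QuotientGroup.mk (FreeGroup.of i)


/-! ### Heisenberg group -/

@[ext] structure Hb where
  p : ℤ
  q : ℤ
  r : ℤ

namespace Hb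

instance : Mul Hb := ⟨fun u v => ⟨u.p + v.p, u.q + v.q, u.r + v.r + u.q * v.p⟩⟩
instance : One Hb := ⟨⟨0, 0, 0⟩⟩
instance : Inv Hb := ⟨fun u => ⟨-u.p, -u.q, u.p * u.q - u.r⟩⟩

@[simp] lemma mul_p (u v : Hb) : (u * v).p = u.p + v.p := rfl
@[simp] lemma mul_q (u v : Hb) : (u * v).q = u.q + v.q := rfl
@[simp] lemma mul_r (u v : Hb) : (u * v).r = u.r + v.r + u.q * v.p := rfl
@[simp] lemma one_p : (1 : Hb).p = 0 := rfl
@[simp] lemma one_q : (1 : Hb).q = 0 := rfl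
@[simp] lemma one_r : (1 : Hb).r = 0 := rfl
@[simp] lemma inv_p (u : Hb) : u⁻¹.p = -u.p := rfl
@[simp] lemma inv_q (u : Hb) : u⁻¹.q = -u.q := rfl
@[simp] lemma inv_r (u : Hb) : u⁻¹.r = u.p * u.q - u.r := rfl

instance : Group Hb where
  mul_assoc u v w := by ext <;> simp <;> ring
  one_mul u := by ext <;> simp
  mul_one u := by ext <;> simp
  inv_mul_cancel u := by ext <;> simp <;> ring

def A : Hb := ⟨1, 0, 0⟩
def B : Hb := ⟨0, 1, 0⟩

lemma comm_conj_self (v h : Hb) : Commute v (h * v * h⁻¹) := by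
  show _ = _
  ext <;> simp <;> ring

@[simp] lemma C_zpow (m : ℤ) : (⟨0, 0, 1⟩ : Hb) ^ m = ⟨0, 0, m⟩ := by
  induction m using Int.induction_on with
  | zero => rfl
  | succ n ih => rw [zpow_add_one, ih]; ext <;> simp
  | pred n ih => rw [zpow_sub_one, ih]; ext <;> simp <;> ring

end Hb

/-! ### The homomorphism `RF 2 →* Hb` -/

def θ₀ : FreeGroup (Fin 2) →* Hb := FreeGroup.lift (fun i => if i = 0 then Hb.A else Hb.B)

lemma rel_le_ker : Subgroup.normalClosure (RFrel 2) ≤ θ₀.ker := by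
  refine Subgroup.normalClosure_le_normal ?_
  rintro w ⟨i, g, rfl⟩
  simp only [SetLike.mem_coe, MonoidHom.mem_ker, map_commutatorElement, map_mul, map_inv]
  exact commutatorElement_eq_one_iff_commute.mpr (Hb.comm_conj_self _ _)

def θ : RF 2 →* Hb := QuotientGroup.lift _ θ₀ rel_le_ker

@[simp] lemma θ_x0 : θ (x (0 : Fin 2)) = Hb.A := by
  show θ₀ (FreeGroup.of 0) = Hb.A
  simp [θ₀]

@[simp] lemma θ_x1 : θ (x (1 : Fin 2)) = Hb.B := by
  show θ₀ (FreeGroup.of 1) = Hb.B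
  simp [θ₀, Hb.A, Hb.B]
/-! ### Structure of `RF 2` -/

abbrev rfmk : FreeGroup (Fin 2) →* RF 2 := QuotientGroup.mk' (Subgroup.normalClosure (RFrel 2))

lemma x_eq (i : Fin 2) : x i = rfmk (FreeGroup.of i) := rfl

lemma rfmk_surjective : Function.Surjective rfmk := QuotientGroup.mk'_surjective _

lemma comm_conj0 (i : Fin 2) (u : RF 2) : Commute (x i) (u * x i * u⁻¹) := by
  obtain ⟨g, rfl⟩ := rfmk_surjective u
  rw [← commutatorElement_eq_one_iff_commute]
  have : rfmk ⁅FreeGroup.of i, g * FreeGroup.of i * g⁻¹⁆ = 1 := by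
    rw [← MonoidHom.mem_ker]
    erw [QuotientGroup.ker_mk']
    exact Subgroup.subset_normalClosure ⟨i, g, rfl⟩
  rw [map_commutatorElement, map_mul, map_mul, map_inv] at this
  exact this

def cc : RF 2 := ⁅x (1 : Fin 2), x (0 : Fin 2)⁆

lemma comm_cc_x0 : Commute cc (x (0 : Fin 2)) := by
  have h : Commute (x (0 : Fin 2)) (x 1 * x 0 * (x 1)⁻¹) := comm_conj0 0 (x 1)
  have e : cc = (x 1 * x 0 * (x 1)⁻¹) * (x 0)⁻¹ := rfl
  rw [e]
  exact Commute.mul_left h.symm (Commute.refl _).inv_left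

lemma comm_cc_x1 : Commute cc (x (1 : Fin 2)) := by
  have h : Commute (x (1 : Fin 2)) (x 0 * x 1 * (x 0)⁻¹) := comm_conj0 1 (x 0)
  have e : cc = x 1 * (x 0 * x 1 * (x 0)⁻¹)⁻¹ := by
    show x 1 * x 0 * (x 1)⁻¹ * (x 0)⁻¹ = _
    group
  rw [e]
  exact Commute.mul_left (Commute.refl _) h.inv_right.symm

lemma comm_cc (w : RF 2) : Commute cc w := by
  obtain ⟨g, rfl⟩ := rfmk_surjective w
  induction g using FreeGroup.induction_on with
  | C1 => simpa using Commute.one_right cc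

  | of i =>
    show Commute cc (x i)
    fin_cases i
    · exact comm_cc_x0
    · exact comm_cc_x1
  | inv_of i h => rw [map_inv]; exact h.inv_right
  | mul u v hu hv => rw [map_mul]; exact hu.mul_right hv

/-- Move a central power of `cc` across a factor. -/
lemma ccmove (m : ℤ) (u w : RF 2) : u * cc ^ m * w = u * w * cc ^ m := by
  rw [mul_assoc, mul_assoc, ((comm_cc w).zpow_left m).eq]

lemma rel10' : x (1 : Fin 2) * x 0 = x 0 * x 1 * cc := by
  have : cc * (x 0 * x 1) = x 1 * x 0 := by
    show x 1 * x 0 * (x 1)⁻¹ * (x 0)⁻¹ * (x 0 * x 1) = x 1 * x 0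
    group
  rw [← this, (comm_cc (x 0 * x 1)).eq]

lemma rel01' : x (0 : Fin 2) * x 1 = x 1 * x 0 * cc⁻¹ := by
  rw [rel10', mul_assoc, mul_inv_cancel, mul_one]

lemma pow10 (m : ℤ) : x (1 : Fin 2) ^ m * x 0 = x 0 * x 1 ^ m * cc ^ m := by
  induction m using Int.induction_on with
  | zero => simp
  | succ n ih =>
    calc x (1 : Fin 2) ^ ((n : ℤ) + 1) * x 0
        = x 1 ^ (n : ℤ) * (x 1 * x 0) := by rw [zpow_add_one, mul_assoc]
      _ = x 1 ^ (n : ℤ) * x 0 * x 1 * cc := by rw [rel10']; group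
      _ = x 0 * x 1 ^ (n : ℤ) * cc ^ (n : ℤ) * x 1 * cc := by rw [ih]
      _ = x 0 * x 1 ^ (n : ℤ) * x 1 * cc ^ (n : ℤ) * cc := by rw [ccmove]
      _ = x 0 * x 1 ^ ((n : ℤ) + 1) * cc ^ ((n : ℤ) + 1) := by
            rw [zpow_add_one, zpow_add_one]; group
  | pred n ih =>
    have key : (x (1 : Fin 2))⁻¹ * x 0 = x 0 * (x 1)⁻¹ * cc⁻¹ :=
      calc (x (1 : Fin 2))⁻¹ * x 0
          = (x 1)⁻¹ * (x 0 * x 1) * (x 1)⁻¹ := by group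
        _ = (x 1)⁻¹ * (x 1 * x 0 * cc⁻¹) * (x 1)⁻¹ := by rw [rel01']
        _ = x 0 * (cc⁻¹ * (x 1)⁻¹) := by group
        _ = x 0 * (x 1)⁻¹ * cc⁻¹ := by rw [(comm_cc ((x 1):RF 2)⁻¹).inv_left.eq, mul_assoc]
    calc x (1 : Fin 2) ^ (-(n : ℤ) - 1) * x 0
        = x 1 ^ (-(n : ℤ)) * ((x 1)⁻¹ * x 0) := by
            rw [zpow_sub_one, mul_assoc]
      _ = x 1 ^ (-(n : ℤ)) * x 0 * (x 1)⁻¹ * cc⁻¹ := by rw [key]; group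
      _ = x 0 * x 1 ^ (-(n : ℤ)) * cc ^ (-(n : ℤ)) * (x 1)⁻¹ * cc⁻¹ := by rw [ih]
      _ = x 0 * x 1 ^ (-(n : ℤ)) * (x 1)⁻¹ * cc ^ (-(n : ℤ)) * cc⁻¹ := by rw [ccmove]
      _ = x 0 * x 1 ^ (-(n : ℤ) - 1) * cc ^ (-(n : ℤ) - 1) := by
            rw [zpow_sub_one, zpow_sub_one]; group

lemma pow01 (k : ℤ) : x (0 : Fin 2) ^ k * x 1 = x 1 * x 0 ^ k * cc ^ (-k) := by
  induction k using Int.induction_on with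
  | zero => simp
  | succ n ih =>
    calc x (0 : Fin 2) ^ ((n : ℤ) + 1) * x 1
        = x 0 ^ (n : ℤ) * (x 0 * x 1) := by rw [zpow_add_one, mul_assoc]
      _ = x 0 ^ (n : ℤ) * x 1 * x 0 * cc⁻¹ := by rw [rel01']; group
      _ = x 1 * x 0 ^ (n : ℤ) * cc ^ (-(n : ℤ)) * x 0 * cc⁻¹ := by rw [ih]
      _ = x 1 * x 0 ^ (n : ℤ) * x 0 * cc ^ (-(n : ℤ)) * cc⁻¹ := by rw [ccmove]
      _ = x 1 * x 0 ^ ((n : ℤ) + 1) * cc ^ (-((n : ℤ) + 1)) := by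
            rw [zpow_add_one, show -((n : ℤ) + 1) = -(n : ℤ) + -1 by ring, zpow_add]; group
  | pred n ih =>
    have key : (x (0 : Fin 2))⁻¹ * x 1 = x 1 * (x 0)⁻¹ * cc :=
      calc (x (0 : Fin 2))⁻¹ * x 1
          = (x 0)⁻¹ * (x 1 * x 0) * (x 0)⁻¹ := by group
        _ = (x 0)⁻¹ * (x 0 * x 1 * cc) * (x 0)⁻¹ := by rw [rel10']
        _ = x 1 * (cc * (x 0)⁻¹) := by group
        _ = x 1 * (x 0)⁻¹ * cc := by rw [(comm_cc ((x 0):RF 2)⁻¹).eq, mul_assoc]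
    calc x (0 : Fin 2) ^ (-(n : ℤ) - 1) * x 1
        = x 0 ^ (-(n : ℤ)) * ((x 0)⁻¹ * x 1) := by rw [zpow_sub_one, mul_assoc]
      _ = x 0 ^ (-(n : ℤ)) * x 1 * (x 0)⁻¹ * cc := by rw [key]; group
      _ = x 1 * x 0 ^ (-(n : ℤ)) * cc ^ ((n : ℤ)) * (x 0)⁻¹ * cc := by rw [ih]; group
      _ = x 1 * x 0 ^ (-(n : ℤ)) * (x 0)⁻¹ * cc ^ ((n : ℤ)) * cc := by rw [ccmove]
      _ = x 1 * x 0 ^ (-(n : ℤ) - 1) * cc ^ (-(-(n : ℤ) - 1)) := by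
            rw [zpow_sub_one, show -(-(n : ℤ) - 1) = (n : ℤ) + 1 by ring, zpow_add]; group

lemma conj1 (m : ℤ) : (x (1 : Fin 2) ^ m)⁻¹ * x 0 * x 1 ^ m = x 0 * cc ^ (-m) := by
  have h := pow10 (-m)
  rw [zpow_neg] at h
  rw [← zpow_neg] at h
  calc (x (1 : Fin 2) ^ m)⁻¹ * x 0 * x 1 ^ m
      = x 1 ^ (-m) * x 0 * x 1 ^ m := by rw [zpow_neg]
    _ = x 0 * x 1 ^ (-m) * cc ^ (-m) * x 1 ^ m := by rw [pow10]
    _ = x 0 * x 1 ^ (-m) * x 1 ^ m * cc ^ (-m) := by rw [ccmove]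
    _ = x 0 * cc ^ (-m) := by rw [mul_assoc (x 0), ← zpow_add]; simp

lemma conj2 (k : ℤ) : (x (0 : Fin 2) ^ k)⁻¹ * x 1 * x 0 ^ k = x 1 * cc ^ k := by
  calc (x (0 : Fin 2) ^ k)⁻¹ * x 1 * x 0 ^ k
      = x 0 ^ (-k) * x 1 * x 0 ^ k := by rw [zpow_neg]
    _ = x 1 * x 0 ^ (-k) * cc ^ k * x 0 ^ k := by rw [pow01]; group
    _ = x 1 * x 0 ^ (-k) * x 0 ^ k * cc ^ k := by rw [ccmove]
    _ = x 1 * cc ^ k := by rw [mul_assoc (x 1), ← zpow_add]; simp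

lemma conj_mul_step (y u v : RF 2) (m k : ℤ) (hu : u⁻¹ * y * u = y * cc ^ m)
    (hv : v⁻¹ * y * v = y * cc ^ k) : (u * v)⁻¹ * y * (u * v) = y * cc ^ (m + k) := by
  calc (u * v)⁻¹ * y * (u * v)
      = v⁻¹ * (u⁻¹ * y * u) * v := by group
    _ = v⁻¹ * y * cc ^ m * v := by rw [hu, ← mul_assoc]
    _ = v⁻¹ * y * v * cc ^ m := by rw [ccmove]
    _ = y * cc ^ k * cc ^ m := by rw [hv]
    _ = y * cc ^ (m + k) := by rw [mul_assoc, ← zpow_add, add_comm]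

lemma conj_inv_step (y w : RF 2) (m : ℤ) (hw : w⁻¹ * y * w = y * cc ^ m) :
    w * y * w⁻¹ = y * cc ^ (-m) := by
  have h2 : w * (y * cc ^ m) * w⁻¹ = y := by rw [← hw]; group
  rw [← mul_assoc, ccmove] at h2
  calc w * y * w⁻¹
      = w * y * w⁻¹ * cc ^ m * cc ^ (-m) := by rw [mul_assoc _ (cc ^ m), ← zpow_add]; simp
    _ = y * cc ^ (-m) := by rw [h2]

/-- Classification of conjugates of the generators. -/
lemma conj_classify (w : RF 2) :
    (∃ m : ℤ, w⁻¹ * x 0 * w = x 0 * cc ^ m) ∧ (∃ k : ℤ, w⁻¹ * x 1 * w = x 1 * cc ^ k) := by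
  obtain ⟨g, rfl⟩ := rfmk_surjective w
  induction g using FreeGroup.induction_on with
  | C1 => exact ⟨⟨0, by simp⟩, ⟨0, by simp⟩⟩
  | of i =>
    show (∃ m : ℤ, (x i)⁻¹ * x 0 * x i = x 0 * cc ^ m) ∧
        (∃ k : ℤ, (x i)⁻¹ * x 1 * x i = x 1 * cc ^ k)
    fin_cases i
    · refine ⟨⟨0, by simp [mul_assoc]⟩, ⟨1, ?_⟩⟩
      have := conj2 1
      simpa using this
    · refine ⟨⟨-1, ?_⟩, ⟨0, by simp [mul_assoc]⟩⟩
      have := conj1 1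
      simpa using this
  | inv_of i h =>
    obtain ⟨⟨m, hm⟩, ⟨k, hk⟩⟩ := h
    rw [map_inv]
    exact ⟨⟨-m, by rw [inv_inv]; exact conj_inv_step _ _ _ hm⟩,
      ⟨-k, by rw [inv_inv]; exact conj_inv_step _ _ _ hk⟩⟩
  | mul u v hu hv =>
    obtain ⟨⟨m, hm⟩, ⟨k, hk⟩⟩ := hu
    obtain ⟨⟨m', hm'⟩, ⟨k', hk'⟩⟩ := hv
    rw [map_mul]
    exact ⟨⟨m + m', conj_mul_step _ _ _ _ _ hm hm'⟩, ⟨k + k', conj_mul_step _ _ _ _ _ hk hk'⟩⟩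

/-- `cc` has infinite order. -/
lemma cc_zpow_inj {a b : ℤ} (h : cc ^ a = cc ^ b) : a = b := by
  have : θ cc ^ a = θ cc ^ b := by rw [← map_zpow, ← map_zpow, h]
  have hcc : θ cc = ⟨0, 0, 1⟩ := by
    show θ ⁅x (1 : Fin 2), x 0⁆ = _
    rw [map_commutatorElement, θ_x0, θ_x1]
    show Hb.B * Hb.A * (Hb.B)⁻¹ * (Hb.A)⁻¹ = _
    ext <;> simp [Hb.A, Hb.B]
  rw [hcc, Hb.C_zpow, Hb.C_zpow] at this
  exact congrArg Hb.r this

/-- Homomorphisms out of `RF 2` are determined by their values on the generators. -/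
lemma hom_ext {G : Type*} [Group G] {f g : RF 2 →* G}
    (h0 : f (x 0) = g (x 0)) (h1 : f (x 1) = g (x 1)) : f = g := by
  apply QuotientGroup.monoidHom_ext
  apply FreeGroup.ext_hom
  intro i
  fin_cases i
  · exact h0
  · exact h1

lemma comm_central_pair (y : RF 2) (a b : ℤ) : Commute (y * cc ^ a) (y * cc ^ b) := by
  have l : ∀ a b : ℤ, y * cc ^ a * (y * cc ^ b) = y * y * cc ^ (a + b) := fun a b =>
    calc y * cc ^ a * (y * cc ^ b)
        = y * cc ^ a * y * cc ^ b := (mul_assoc _ _ _).symm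
      _ = y * y * cc ^ a * cc ^ b := by rw [ccmove]
      _ = y * y * cc ^ (a + b) := by rw [mul_assoc (y * y), ← zpow_add]
  show _ = _
  rw [l, l, add_comm]

lemma conj_inv_classify (i : Fin 2) (V : RF 2) : ∃ s : ℤ, V * x i * V⁻¹ = x i * cc ^ s := by
  fin_cases i
  · obtain ⟨⟨m, hm⟩, -⟩ := conj_classify V
    exact ⟨-m, conj_inv_step _ _ _ hm⟩
  · obtain ⟨-, ⟨k, hk⟩⟩ := conj_classify V
    exact ⟨-k, conj_inv_step _ _ _ hk⟩

lemma comm_conj_central (i : Fin 2) (a : ℤ) (V : RF 2) :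
    Commute (x i * cc ^ a) (V * (x i * cc ^ a) * V⁻¹) := by
  obtain ⟨s, hs⟩ := conj_inv_classify i V
  have key : V * (x i * cc ^ a) * V⁻¹ = x i * cc ^ (s + a) := by
    calc V * (x i * cc ^ a) * V⁻¹
        = V * x i * cc ^ a * V⁻¹ := by rw [← mul_assoc V (x i)]
      _ = V * x i * V⁻¹ * cc ^ a := by rw [ccmove]
      _ = x i * cc ^ s * cc ^ a := by rw [hs]
      _ = x i * cc ^ (s + a) := by rw [mul_assoc, ← zpow_add]
  rw [key]
  exact comm_central_pair _ _ _

/-- Conjugation by a central multiple. -/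
lemma central_conj (a w : RF 2) (s : ℤ) : (a * cc ^ s) * w * (a * cc ^ s)⁻¹ = a * w * a⁻¹ := by
  have h : cc ^ s * w * (cc ^ s)⁻¹ = w := by
    rw [((comm_cc w).zpow_left s).eq]; group
  calc (a * cc ^ s) * w * (a * cc ^ s)⁻¹
      = a * (cc ^ s * w * (cc ^ s)⁻¹) * a⁻¹ := by rw [mul_inv_rev]; group
    _ = a * w * a⁻¹ := by rw [h]

lemma comm_elt_central (a b : RF 2) (s t : ℤ) : ⁅a * cc ^ s, b * cc ^ t⁆ = ⁅a, b⁆ := by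
  have h2 : cc ^ t * a⁻¹ * (cc ^ t)⁻¹ = a⁻¹ := by
    rw [((comm_cc a⁻¹).zpow_left t).eq]; group
  calc ⁅a * cc ^ s, b * cc ^ t⁆
      = (a * cc ^ s) * (b * cc ^ t) * (a * cc ^ s)⁻¹ * (b * cc ^ t)⁻¹ := by
        rw [commutatorElement_def]
    _ = (a * (b * cc ^ t) * a⁻¹) * (b * cc ^ t)⁻¹ := by rw [central_conj]
    _ = a * b * (cc ^ t * a⁻¹ * (cc ^ t)⁻¹) * b⁻¹ := by rw [mul_inv_rev]; group
    _ = a * b * a⁻¹ * b⁻¹ := by rw [h2]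
    _ = ⁅a, b⁆ := (commutatorElement_def a b).symm

/-! ### The conjugating automorphisms `F m k` -/

def F₀ (m k : ℤ) : FreeGroup (Fin 2) →* RF 2 :=
  FreeGroup.lift (fun i => if i = 0 then x 0 * cc ^ (-m) else x 1 * cc ^ k)

lemma F₀_of (m k : ℤ) (i : Fin 2) :
    F₀ m k (FreeGroup.of i) = x i * cc ^ (if i = 0 then -m else k) := by
  fin_cases i <;> simp [F₀]

lemma Frel (m k : ℤ) : Subgroup.normalClosure (RFrel 2) ≤ (F₀ m k).ker := by
  refine Subgroup.normalClosure_le_normal ?_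
  rintro w ⟨i, g, rfl⟩
  simp only [SetLike.mem_coe, MonoidHom.mem_ker, map_commutatorElement, map_mul, map_inv, F₀_of]
  exact commutatorElement_eq_one_iff_commute.mpr (comm_conj_central i _ _)

def Fh (m k : ℤ) : RF 2 →* RF 2 := QuotientGroup.lift _ (F₀ m k) (Frel m k)

@[simp] lemma Fh_x (m k : ℤ) (i : Fin 2) :
    Fh m k (x i) = x i * cc ^ (if i = 0 then -m else k) := F₀_of m k i

lemma Fh_x0 (m k : ℤ) : Fh m k (x 0) = x 0 * cc ^ (-m) := by simp
lemma Fh_x1 (m k : ℤ) : Fh m k (x 1) = x 1 * cc ^ k := by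
  rw [Fh_x]; norm_num

lemma Fh_cc (m k : ℤ) : Fh m k cc = cc := by
  show Fh m k ⁅x (1 : Fin 2), x 0⁆ = cc
  rw [map_commutatorElement, Fh_x0, Fh_x1, comm_elt_central]
  rfl

lemma Fh_comp (m k m' k' : ℤ) :
    (Fh m k).comp (Fh m' k') = Fh (m + m') (k + k') := by
  apply hom_ext
  · rw [MonoidHom.comp_apply, Fh_x0, map_mul, map_zpow, Fh_x0, Fh_cc, Fh_x0,
      mul_assoc, ← zpow_add, neg_add]
  · rw [MonoidHom.comp_apply, Fh_x1, map_mul, map_zpow, Fh_x1, Fh_cc, Fh_x1,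
      mul_assoc, ← zpow_add]

lemma Fh_zero : Fh 0 0 = MonoidHom.id (RF 2) := by
  apply hom_ext <;> simp

def Faut (m k : ℤ) : MulAut (RF 2) :=
  { toFun := Fh m k
    invFun := Fh (-m) (-k)
    left_inv := fun w => by
      have h : (Fh (-m) (-k)).comp (Fh m k) = MonoidHom.id (RF 2) := by
        rw [Fh_comp]; simpa using Fh_zero
      exact DFunLike.congr_fun h w
    right_inv := fun w => by
      have h : (Fh m k).comp (Fh (-m) (-k)) = MonoidHom.id (RF 2) := by
        rw [Fh_comp]; simpa using Fh_zero
      exact DFunLike.congr_fun h w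
    map_mul' := map_mul _ }

lemma Faut_apply (m k : ℤ) (w : RF 2) : Faut m k w = Fh m k w := rfl

/-! ### Assembly -/

lemma aut_ext {φ ψ : MulAut (RF 2)} (h0 : φ (x 0) = ψ (x 0)) (h1 : φ (x 1) = ψ (x 1)) :
    φ = ψ := by
  have h := hom_ext (f := φ.toMonoidHom) (g := ψ.toMonoidHom) h0 h1
  exact MulEquiv.toMonoidHom_injective h

def Sc : Subgroup (MulAut (RF 2)) where
  carrier := {φ | ∀ i : Fin 2, ∃ w : RF 2, φ (x i) = w⁻¹ * x i * w}
  one_mem' := fun i => ⟨1, by simp⟩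
  mul_mem' := by
    intro φ ψ hφ hψ i
    obtain ⟨v, hv⟩ := hφ i
    obtain ⟨w, hw⟩ := hψ i
    refine ⟨v * φ w, ?_⟩
    rw [MulAut.mul_apply, hw, map_mul, map_mul, map_inv, hv]
    group
  inv_mem' := by
    intro φ hφ i
    obtain ⟨w, hw⟩ := hφ i
    refine ⟨(φ⁻¹ w)⁻¹, ?_⟩
    have h2 : (φ⁻¹ w)⁻¹ * φ⁻¹ (x i) * φ⁻¹ w = x i := by
      rw [MulAut.inv_def, ← map_inv, ← map_mul, ← map_mul, ← hw, MulEquiv.symm_apply_apply]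
    rw [inv_inv]
    calc φ⁻¹ (x i) = φ⁻¹ w * ((φ⁻¹ w)⁻¹ * φ⁻¹ (x i) * φ⁻¹ w) * (φ⁻¹ w)⁻¹ := by group
      _ = φ⁻¹ w * x i * (φ⁻¹ w)⁻¹ := by rw [h2]

lemma mem_Sc {φ : MulAut (RF 2)} :
    φ ∈ Sc ↔ ∀ i : Fin 2, ∃ w : RF 2, φ (x i) = w⁻¹ * x i * w := Iff.rfl

lemma Sc_values {φ : MulAut (RF 2)} (hφ : φ ∈ Sc) :
    ∃ m k : ℤ, φ (x 0) = x 0 * cc ^ m ∧ φ (x 1) = x 1 * cc ^ k := by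
  obtain ⟨w0, h0⟩ := hφ 0
  obtain ⟨w1, h1⟩ := hφ 1
  obtain ⟨⟨m, hm⟩, -⟩ := conj_classify w0
  obtain ⟨-, ⟨k, hk⟩⟩ := conj_classify w1
  exact ⟨m, k, by rw [h0, hm], by rw [h1, hk]⟩

def eHom : Multiplicative (ℤ × ℤ) →* MulAut (RF 2) :=
  MonoidHom.mk' (fun p => Faut p.toAdd.1 p.toAdd.2) (by
    intro p q
    have key : ∀ i : Fin 2, Faut (p.toAdd.1 + q.toAdd.1) (p.toAdd.2 + q.toAdd.2) (x i) =
        Faut p.toAdd.1 p.toAdd.2 (Faut q.toAdd.1 q.toAdd.2 (x i)) := by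
      intro i
      show Fh (p.toAdd.1 + q.toAdd.1) (p.toAdd.2 + q.toAdd.2) (x i) =
        Fh p.toAdd.1 p.toAdd.2 (Fh q.toAdd.1 q.toAdd.2 (x i))
      rw [← Fh_comp]
      rfl
    apply aut_ext
    · rw [MulAut.mul_apply]; exact key 0
    · rw [MulAut.mul_apply]; exact key 1)

lemma eHom_mem (p : Multiplicative (ℤ × ℤ)) : eHom p ∈ Sc := by
  intro i
  fin_cases i
  · refine ⟨x 1 ^ p.toAdd.1, ?_⟩
    show Fh p.toAdd.1 p.toAdd.2 (x 0) = (x 1 ^ p.toAdd.1)⁻¹ * x 0 * x 1 ^ p.toAdd.1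
    rw [Fh_x0, conj1]
  · refine ⟨x 0 ^ p.toAdd.2, ?_⟩
    show Fh p.toAdd.1 p.toAdd.2 (x 1) = (x 0 ^ p.toAdd.2)⁻¹ * x 1 * x 0 ^ p.toAdd.2
    rw [Fh_x1, conj2]

def eS : Multiplicative (ℤ × ℤ) →* Sc := eHom.codRestrict Sc eHom_mem

lemma eS_bijective : Function.Bijective eS := by
  constructor
  · rw [injective_iff_map_eq_one]
    intro p hp
    have h : Faut p.toAdd.1 p.toAdd.2 = 1 := congrArg Subtype.val hp
    have h0 : x (0 : Fin 2) * cc ^ (-p.toAdd.1) = x 0 := by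
      rw [← Fh_x0 p.toAdd.1 p.toAdd.2]
      exact congrFun (congrArg (fun (ψ : MulAut (RF 2)) => (ψ : RF 2 → RF 2)) h) (x 0)
    have h1 : x (1 : Fin 2) * cc ^ (p.toAdd.2) = x 1 := by
      rw [← Fh_x1 p.toAdd.1 p.toAdd.2]
      exact congrFun (congrArg (fun (ψ : MulAut (RF 2)) => (ψ : RF 2 → RF 2)) h) (x 1)
    have e0 : cc ^ (-p.toAdd.1) = cc ^ (0 : ℤ) := by
      rw [zpow_zero]
      exact mul_left_cancel (a := x (0 : Fin 2)) (by rw [h0, mul_one])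
    have e1 : cc ^ (p.toAdd.2) = cc ^ (0 : ℤ) := by
      rw [zpow_zero]
      exact mul_left_cancel (a := x (1 : Fin 2)) (by rw [h1, mul_one])
    have : p.toAdd.1 = 0 := by have := cc_zpow_inj e0; omega
    have : p.toAdd.2 = 0 := cc_zpow_inj e1
    show p = Multiplicative.ofAdd 0
    apply Multiplicative.toAdd.injective
    ext <;> simp_all
  · rintro ⟨φ, hφ⟩
    obtain ⟨m, k, h0, h1⟩ := Sc_values hφ
    refine ⟨Multiplicative.ofAdd (-m, k), ?_⟩
    apply Subtype.ext
    show Faut (-m) k = φ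
    apply aut_ext
    · show Fh (-m) k (x 0) = φ (x 0)
      rw [Fh_x0, h0, neg_neg]
    · show Fh (-m) k (x 1) = φ (x 1)
      rw [Fh_x1, h1]


/-- For `RF 2`: the conjugating automorphisms form a subgroup of `Aut(RF 2)`;
every conjugating automorphism `φ` is determined by a unique pair
`(LK₂₁(φ), LK₁₂(φ)) ∈ ℤ²` with `φ(x₁) = x₂^{-m} x₁ x₂^m` and
`φ(x₂) = x₁^{-k} x₂ x₁^k`; and `Aut_C(RF 2) ≅ ℤ²` as a group. -/
theorem stmt18 :
    ∃ S : Subgroup (MulAut (RF 2)),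
      (S : Set (MulAut (RF 2))) =
        {φ | ∀ i : Fin 2, ∃ w : RF 2, φ (x i) = w⁻¹ * x i * w} ∧
      (∀ φ : MulAut (RF 2), φ ∈ S → ∃! p : ℤ × ℤ,
        φ (x (0 : Fin 2)) =
          ((x (1 : Fin 2)) ^ p.1)⁻¹ * x (0 : Fin 2) * (x (1 : Fin 2)) ^ p.1 ∧
        φ (x (1 : Fin 2)) =
          ((x (0 : Fin 2)) ^ p.2)⁻¹ * x (1 : Fin 2) * (x (0 : Fin 2)) ^ p.2) ∧
      Nonempty (S ≃* Multiplicative (ℤ × ℤ)) := by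
  refine ⟨Sc, rfl, ?_, ⟨(MulEquiv.ofBijective eS eS_bijective).symm⟩⟩
  intro φ hφ
  obtain ⟨m, k, h0, h1⟩ := Sc_values hφ
  refine ⟨(-m, k), ⟨?_, ?_⟩, ?_⟩
  · rw [conj1, neg_neg, h0]
  · rw [conj2, h1]
  · rintro ⟨a, b⟩ ⟨ha, hb⟩
    rw [conj1, h0] at ha
    rw [conj2, h1] at hb
    have e1 : m = -a := cc_zpow_inj (mul_left_cancel ha)
    have e2 : k = b := cc_zpow_inj (mul_left_cancel hb)
    have : a = -m := by omega
    rw [this, e2]
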